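/- Let t ≥ 1, let μ > 1 be a real number, and let A, P, Q be real t×t matrices such that P, Q, A, and I − A are all invertible and (I − A)·P = (1/(μ−1))·A·Q. Then (I − A)·P + A·Q is invertible and P⁻¹ + (μ−1)·Q⁻¹ = μ·((I − A)·P + A·Q)⁻¹. -/

import Mathlib

open Matrix

/-- Proportionality property: if `(I - A) * P = (1/(μ-1)) • (A * Q)` with everything
invertible, then `(I - A) * P + A * Q` is invertible and
`P⁻¹ + (μ-1) • Q⁻¹ = μ • ((I - A) * P + A * Q)⁻¹`. -/
theorem stmt_4 (t : ℕ) (ht : 1 ≤ t) (μ : ℝ) (hμ : 1 < μ)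
    (A P Q : Matrix (Fin t) (Fin t) ℝ)
    (hP : IsUnit P) (hQ : IsUnit Q) (hA : IsUnit A) (hIA : IsUnit (1 - A))
    (hprop : (1 - A) * P = (1 / (μ - 1)) • (A * Q)) :
    IsUnit ((1 - A) * P + A * Q) ∧
      P⁻¹ + (μ - 1) • Q⁻¹ = μ • ((1 - A) * P + A * Q)⁻¹ := by
  have hμ1 : μ - 1 ≠ 0 := sub_ne_zero.mpr (ne_of_gt hμ)
  have hμ0 : μ ≠ 0 := by linarith
  have hAd : IsUnit A.det := (Matrix.isUnit_iff_isUnit_det A).mp hA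
  have hQd : IsUnit Q.det := (Matrix.isUnit_iff_isUnit_det Q).mp hQ
  have hcanc : Q⁻¹ * A⁻¹ * (A * Q) = 1 := by
    rw [Matrix.mul_assoc, Matrix.nonsing_inv_mul_cancel_left A Q hAd,
      Matrix.nonsing_inv_mul Q hQd]
  have hS : (1 - A) * P + A * Q = (μ / (μ - 1)) • (A * Q) := by
    rw [hprop, show (μ / (μ - 1)) = 1 / (μ - 1) + 1 by field_simp; ring,
      add_smul, one_smul]
  have hleft : (((μ - 1) / μ) • (Q⁻¹ * A⁻¹)) * ((1 - A) * P + A * Q) = 1 := by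
    rw [hS, Matrix.smul_mul, Matrix.mul_smul, smul_smul, hcanc]
    rw [show (μ - 1) / μ * (μ / (μ - 1)) = 1 by field_simp]
    simp
  have hSu : IsUnit ((1 - A) * P + A * Q) := by
    have := Matrix.inv_eq_left_inv hleft
    rw [Matrix.isUnit_iff_isUnit_det]
    exact Matrix.isUnit_det_of_left_inverse hleft
  refine ⟨hSu, ?_⟩
  have hSinv : ((1 - A) * P + A * Q)⁻¹ = ((μ - 1) / μ) • (Q⁻¹ * A⁻¹) :=
    Matrix.inv_eq_left_inv hleft
  have hPinv : P⁻¹ = (μ - 1) • (Q⁻¹ * A⁻¹ * (1 - A)) := by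
    apply Matrix.inv_eq_left_inv
    rw [Matrix.smul_mul, Matrix.mul_assoc, hprop, Matrix.mul_smul, smul_smul,
      show (μ - 1) * (1 / (μ - 1)) = 1 by field_simp, one_smul, hcanc]
  rw [hPinv, hSinv, smul_smul, show μ * ((μ - 1) / μ) = μ - 1 by field_simp,
    Matrix.mul_sub, Matrix.mul_one]
  have : Q⁻¹ * A⁻¹ * A = Q⁻¹ := by
    rw [Matrix.mul_assoc, Matrix.nonsing_inv_mul A hAd, Matrix.mul_one]
  rw [this, smul_sub]
  abel
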